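/- (Preservation of the capacity inequality) Suppose Σ_{p_i ∈ X_1} C_i ≥ Σ_{i=1}^n |X_i| L_i + Σ_{t=1}^h (N_{d_t} - N_{d_{t+1}})/(|X_{d_t}| - 1), where N_{d_1},...,N_{d_{h+1}} is the dominant subsequence of the margins (N_{d_{h+1}} = 0, d_h = M). Let N > 0, |X_M| ≥ 2, and perform the updates: total capacity decreases by (|X_M|+1)N/(|X_M|-1) (i.e., Σ C_i' = Σ C_i - N/(|X_M|-1) - |X_M|N/(|X_M|-1)), rates change only in L_M' = L_M - N/(|X_M|-1) (so Σ |X_i| L_i' = Σ |X_i| L_i - |X_M| N/(|X_M|-1)), and the dominant values become N_{d_t}' = N_{d_t} - N for t = 1,...,h with N_{d_{h+1}}' = 0. Then Σ_{p_i ∈ X_1} C_i' ≥ Σ_{i=1}^n |X_i| L_i' + Σ_{t=1}^h (N_{d_t}' - N_{d_{t+1}}')/(|X_{d_t}| - 1). -/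

import Mathlib

/-- Preservation of the capacity inequality under one reduction step
(algebraic core of the induction in Theorem 2). `S` is the total capacity,
`R = ∑ |X i| L i` the total weighted rate, `Nd t` the dominant margin values
(`Nd (h+1) = 0`), and `w t = |X (d t)|` with `w h = |X M| = cM ≥ 2`. After
the update the inequality still holds with the shifted dominant values. -/
theorem stmt_12 (h : ℕ) (hh : 1 ≤ h) (Nv : ℝ) (hNv : 0 < Nv)
    (cM : ℝ) (hcM : 2 ≤ cM)
    (w : ℕ → ℝ) (hw : ∀ t, 1 ≤ t → t ≤ h → 2 ≤ w t) (hwh : w h = cM)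
    (Nd : ℕ → ℝ) (hNd0 : Nd (h + 1) = 0)
    (S R : ℝ)
    (hcap : S ≥ R + ∑ t ∈ Finset.Icc 1 h, (Nd t - Nd (t + 1)) / (w t - 1))
    (S' R' : ℝ) (Nd' : ℕ → ℝ)
    (hS' : S' = S - Nv / (cM - 1) - cM * Nv / (cM - 1))
    (hR' : R' = R - cM * Nv / (cM - 1))
    (hNd' : ∀ t, 1 ≤ t → t ≤ h → Nd' t = Nd t - Nv)
    (hNd'0 : Nd' (h + 1) = 0) :
    S' ≥ R' + ∑ t ∈ Finset.Icc 1 h, (Nd' t - Nd' (t + 1)) / (w t - 1) := by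
  have hcM1 : cM - 1 ≠ 0 := by linarith
  have key : ∑ t ∈ Finset.Icc 1 h, ((Nd' t - Nd' (t + 1)) / (w t - 1)
      - (Nd t - Nd (t + 1)) / (w t - 1))
      = ∑ t ∈ Finset.Icc 1 h, (if t = h then -(Nv / (cM - 1)) else 0) := by
    apply Finset.sum_congr rfl
    intro t ht
    rw [Finset.mem_Icc] at ht
    by_cases hth : t = h
    · subst hth
      rw [hNd' t ht.1 ht.2, hNd'0, hNd0, hwh, if_pos rfl]
      field_simp
      ring
    · have ht1 : t + 1 ≤ h := by omega
      rw [hNd' t ht.1 ht.2, hNd' (t + 1) (by omega) ht1, if_neg hth]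
      ring
  rw [Finset.sum_sub_distrib, Finset.sum_ite_eq' (Finset.Icc 1 h) h
      (fun _ => -(Nv / (cM - 1))), if_pos (Finset.mem_Icc.mpr ⟨hh, le_refl h⟩)] at key
  linarith
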